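/- Let G be a group with finite generating set S and let H ≤ G. For g ∈ G, g lies in Comm(H,G) if and only if the Hausdorff distance between the cosets H and gH in the Cayley graph Γ(G,S) (with the word metric) is finite. -/

import Mathlib

open Pointwise

private lemma setPowFinite {G : Type*} [Group G] {T : Set G} (hT : T.Finite) (K : ℕ) :
    (T ^ K).Finite := by
  induction K with
  | zero => simp only [pow_zero]; exact Set.finite_one
  | succ n ih => rw [pow_succ]; exact ih.mul hT

private lemma existsPowSubset {G : Type*} [Group G] {T : Set G} (h1 : (1 : G) ∈ T)
    (hall : ∀ x : G, ∃ K : ℕ, x ∈ T ^ K) {F : Set G} (hF : F.Finite) :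
    ∃ K : ℕ, F ⊆ T ^ K := by
  choose Kf hKf using hall
  obtain ⟨t, rfl⟩ : ∃ t : Finset G, (t : Set G) = F := ⟨hF.toFinset, hF.coe_toFinset⟩
  refine ⟨t.sup Kf, fun x hx => ?_⟩
  exact Set.pow_subset_pow_right h1 (Finset.le_sup (by exact_mod_cast hx)) (hKf x)

/-- `g ∈ Comm(H,G)` iff the Hausdorff distance between the cosets `H` and `gH` in the
word metric of the finite generating set `S` is finite.  Here "`a` is within distance
`K` of `b`" is expressed as `a⁻¹ * b ∈ (S ∪ S⁻¹ ∪ {1}) ^ K`. -/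
theorem mem_commensurator_iff_hausdorffDist_finite {G : Type*} [Group G]
    (S : Set G) (hSfin : S.Finite) (hgen : Subgroup.closure S = ⊤)
    (H : Subgroup G) (g : G) :
    ((H.map (MulAut.conj g).toMonoidHom ⊓ H).relIndex H ≠ 0 ∧
      (H.map (MulAut.conj g).toMonoidHom ⊓ H).relIndex
        (H.map (MulAut.conj g).toMonoidHom) ≠ 0) ↔
    ∃ K : ℕ,
      (∀ a ∈ (H : Set G), ∃ b ∈ g • (H : Set G), a⁻¹ * b ∈ (S ∪ S⁻¹ ∪ {1}) ^ K) ∧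
      (∀ b ∈ g • (H : Set G), ∃ a ∈ (H : Set G), b⁻¹ * a ∈ (S ∪ S⁻¹ ∪ {1}) ^ K) := by
  set T : Set G := S ∪ S⁻¹ ∪ {1} with hTdef
  set Hg : Subgroup G := H.map (MulAut.conj g).toMonoidHom with hHg
  set L : Subgroup G := Hg ⊓ H with hL
  have h1T : (1 : G) ∈ T := by simp [hTdef]
  have hTinv : T⁻¹ = T := by
    ext x
    simp only [hTdef, Set.mem_inv, Set.mem_union, Set.mem_singleton_iff, Set.mem_inv,
      inv_inv, inv_eq_one]
    constructor <;> rintro ((h | h) | h) <;> simp_all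
  have hTpowinv : ∀ K : ℕ, (T ^ K)⁻¹ = T ^ K := by
    intro K
    induction K with
    | zero => simp
    | succ n ih => rw [pow_succ, mul_inv_rev, hTinv, ih, ← pow_succ', ← pow_succ]
  have hall : ∀ x : G, ∃ K : ℕ, x ∈ T ^ K := by
    intro x
    have hx : x ∈ Subgroup.closure S := by rw [hgen]; trivial
    induction hx using Subgroup.closure_induction with
    | mem y hy => exact ⟨1, by rw [pow_one]; exact Or.inl (Or.inl hy)⟩
    | one => exact ⟨0, by simp⟩
    | mul y z _ _ hy hz =>
      obtain ⟨K1, h1⟩ := hy; obtain ⟨K2, h2⟩ := hz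
      exact ⟨K1 + K2, by rw [pow_add]; exact Set.mul_mem_mul h1 h2⟩
    | inv y _ hy =>
      obtain ⟨K1, h1⟩ := hy
      exact ⟨K1, by rw [← hTpowinv K1]; exact Set.inv_mem_inv.mpr h1⟩
  have hmemHg : ∀ x : G, x ∈ Hg ↔ ∃ h ∈ H, g * h * g⁻¹ = x := by
    intro x
    simp [hHg, Subgroup.mem_map, MulAut.conj_apply]
  constructor
  · rintro ⟨hrel1, hrel2⟩
    haveI : (L.subgroupOf H).FiniteIndex := ⟨hrel1⟩
    haveI : (L.subgroupOf Hg).FiniteIndex := ⟨hrel2⟩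
    haveI fq1 : Finite (Quotient (QuotientGroup.rightRel (L.subgroupOf H))) :=
      Finite.of_equiv _ (QuotientGroup.quotientRightRelEquivQuotientLeftRel _).symm
    haveI fq2 : Finite (Quotient (QuotientGroup.rightRel (L.subgroupOf Hg))) :=
      Finite.of_equiv _ (QuotientGroup.quotientRightRelEquivQuotientLeftRel _).symm
    set f1 : Quotient (QuotientGroup.rightRel (L.subgroupOf H)) → G :=
      fun q => ((Quotient.out q : H) : G)⁻¹ * g with hf1
    set f2 : Quotient (QuotientGroup.rightRel (L.subgroupOf Hg)) → G :=
      fun q => g⁻¹ * ((Quotient.out q : Hg) : G)⁻¹ with hf2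
    obtain ⟨K, hK⟩ := existsPowSubset h1T hall
      ((Set.finite_range f1).union (Set.finite_range f2))
    refine ⟨K, ?_, ?_⟩
    · intro a ha
      set q : Quotient (QuotientGroup.rightRel (L.subgroupOf H)) := ⟦⟨a, ha⟩⟧ with hq
      set r : H := Quotient.out q with hr
      have hrel : a * (r : G)⁻¹ ∈ L := by
        have h0 := Quotient.mk_out (s := QuotientGroup.rightRel (L.subgroupOf H)) (⟨a, ha⟩ : H)
        rw [QuotientGroup.rightRel_apply] at h0
        simpa [Subgroup.mem_subgroupOf] using h0
      obtain ⟨h, hh, hhe⟩ := (hmemHg _).mp hrel.1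
      refine ⟨g * h, ?_, ?_⟩
      · simpa [smul_eq_mul] using Set.smul_mem_smul_set (a := g) hh
      · have key : a⁻¹ * (g * h) = (r : G)⁻¹ * g := by
          have : a = g * h * g⁻¹ * (r : G) := by
            rw [hhe]; group
          rw [this]; group
        rw [key]
        exact hK (Or.inl ⟨q, rfl⟩)
    · intro b hb
      obtain ⟨h, hh, rfl⟩ := hb
      have hx : g * h * g⁻¹ ∈ Hg := (hmemHg _).mpr ⟨h, hh, rfl⟩
      set q : Quotient (QuotientGroup.rightRel (L.subgroupOf Hg)) := ⟦⟨g * h * g⁻¹, hx⟩⟧ with hq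
      set s : Hg := Quotient.out q with hs
      have hrel : (g * h * g⁻¹) * (s : G)⁻¹ ∈ L := by
        have h0 := Quotient.mk_out (s := QuotientGroup.rightRel (L.subgroupOf Hg))
          (⟨g * h * g⁻¹, hx⟩ : Hg)
        rw [QuotientGroup.rightRel_apply] at h0
        simpa [Subgroup.mem_subgroupOf] using h0
      refine ⟨(g * h * g⁻¹) * (s : G)⁻¹, hrel.2, ?_⟩
      have key : (g • h)⁻¹ * ((g * h * g⁻¹) * (s : G)⁻¹) = g⁻¹ * (s : G)⁻¹ := by
        rw [smul_eq_mul]; group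
      rw [key]
      exact hK (Or.inr ⟨q, rfl⟩)
  · rintro ⟨K, hdist1, hdist2⟩
    have hTK : (T ^ K).Finite := setPowFinite
      ((hSfin.union hSfin.inv).union (Set.finite_singleton 1)) K
    haveI := hTK.to_subtype
    constructor
    · -- L.relindex H ≠ 0
      choose bfun hbmem hbdist using fun a : H => hdist1 (a : G) a.2
      haveI : Finite (Quotient (QuotientGroup.rightRel (L.subgroupOf H))) := by
        refine Finite.of_injective
          (fun q : Quotient (QuotientGroup.rightRel (L.subgroupOf H)) =>
            (⟨((Quotient.out q : H) : G)⁻¹ * bfun (Quotient.out q),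
              hbdist (Quotient.out q)⟩ : ↥(T ^ K))) ?_
        intro q1 q2 heq
        simp only [Subtype.mk_eq_mk] at heq
        set a1 : H := Quotient.out q1
        set a2 : H := Quotient.out q2
        obtain ⟨h1, hh1, hb1⟩ := hbmem a1
        obtain ⟨h2, hh2, hb2⟩ := hbmem a2
        simp only [smul_eq_mul] at hb1 hb2
        have hmem : (a1 : G) * (a2 : G)⁻¹ ∈ L := by
          rw [hL, Subgroup.mem_inf]
          refine ⟨?_, H.mul_mem a1.2 (H.inv_mem a2.2)⟩
          have e : (a1 : G) * (a2 : G)⁻¹ = bfun a1 * (bfun a2)⁻¹ := by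
            have e1 : bfun a1 = (a1 : G) * ((a2 : G)⁻¹ * bfun a2) := by rw [← heq]; group
            rw [e1]; group
          rw [← hb1, ← hb2] at e
          have e2 : (a1 : G) * (a2 : G)⁻¹ = g * (h1 * h2⁻¹) * g⁻¹ := by rw [e]; group
          rw [e2]
          exact (hmemHg _).mpr ⟨h1 * h2⁻¹, mul_mem hh1 (inv_mem hh2), rfl⟩
        refine (?_ : q2 = q1).symm
        rw [← Quotient.out_eq q1, ← Quotient.out_eq q2]
        exact Quotient.sound (QuotientGroup.rightRel_apply.mpr
          (by simpa [Subgroup.mem_subgroupOf] using hmem))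
      have : Finite (H ⧸ L.subgroupOf H) :=
        Finite.of_equiv _ (QuotientGroup.quotientRightRelEquivQuotientLeftRel _)
      exact Subgroup.index_ne_zero_of_finite
    · -- L.relindex Hg ≠ 0
      have hbmem0 : ∀ x : Hg, (x : G) * g ∈ g • (H : Set G) := by
        intro x
        obtain ⟨h, hh, hhe⟩ := (hmemHg _).mp x.2
        have : (x : G) * g = g * h := by rw [← hhe]; group
        rw [this]
        simpa [smul_eq_mul] using Set.smul_mem_smul_set (a := g) hh
      choose afun hamem hadist using fun x : Hg => hdist2 ((x : G) * g) (hbmem0 x)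
      haveI : Finite (Quotient (QuotientGroup.rightRel (L.subgroupOf Hg))) := by
        refine Finite.of_injective
          (fun q : Quotient (QuotientGroup.rightRel (L.subgroupOf Hg)) =>
            (⟨(((Quotient.out q : Hg) : G) * g)⁻¹ * afun (Quotient.out q),
              hadist (Quotient.out q)⟩ : ↥(T ^ K))) ?_
        intro q1 q2 heq
        simp only [Subtype.mk_eq_mk] at heq
        set x1 : Hg := Quotient.out q1
        set x2 : Hg := Quotient.out q2
        have hmem : (x1 : G) * (x2 : G)⁻¹ ∈ L := by
          rw [hL, Subgroup.mem_inf]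
          refine ⟨Hg.mul_mem x1.2 (Hg.inv_mem x2.2), ?_⟩
          have e : (x1 : G) * (x2 : G)⁻¹ = afun x1 * (afun x2)⁻¹ := by
            have e1 : afun x1 = ((x1 : G) * g) * ((((x2 : G) * g))⁻¹ * afun x2) := by
              rw [← heq]; group
            rw [e1]; group
          rw [e]
          exact H.mul_mem (SetLike.mem_coe.mp (hamem x1)) (H.inv_mem (SetLike.mem_coe.mp (hamem x2)))
        refine (?_ : q2 = q1).symm
        rw [← Quotient.out_eq q1, ← Quotient.out_eq q2]
        exact Quotient.sound (QuotientGroup.rightRel_apply.mpr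
          (by simpa [Subgroup.mem_subgroupOf] using hmem))
      have : Finite (Hg ⧸ L.subgroupOf Hg) :=
        Finite.of_equiv _ (QuotientGroup.quotientRightRelEquivQuotientLeftRel _)
      exact Subgroup.index_ne_zero_of_finite
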